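/- Let L_1 and L_2 be layers on n channels such that L_1 is maximal. Then there exist a layer S on n channels and a permutation π of {1,…,n} such that outputs(L_1;S) ⊆ π(outputs(L_1;L_2)) and the two-layer network L_1;S is saturated. -/

import Mathlib

namespace SN

open scoped Classical

/-- A comparator on `n` channels: a pair of channels. -/
abbrev Comp (n : ℕ) := Fin n × Fin n

/-- A layer is a finite set of comparators. -/
abbrev Layer (n : ℕ) := Finset (Comp n)

/-- A comparator network is a sequence (list) of layers; its depth is the length. -/
abbrev Net (n : ℕ) := List (Layer n)

/-- Each channel is used by at most one comparator of the layer. -/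
def NoOverlap {n : ℕ} (L : Layer n) : Prop :=
  ∀ c ∈ L, ∀ c' ∈ L, c ≠ c' →
    c.1 ≠ c'.1 ∧ c.1 ≠ c'.2 ∧ c.2 ≠ c'.1 ∧ c.2 ≠ c'.2

/-- A (standard) layer: comparators `(i,j)` with `i < j`, channels pairwise disjoint. -/
def IsLayer {n : ℕ} (L : Layer n) : Prop :=
  (∀ c ∈ L, c.1 < c.2) ∧ NoOverlap L

/-- A generalized layer: comparators `(i,j)` with `i ≠ j` allowed in any order. -/
def IsGenLayer {n : ℕ} (L : Layer n) : Prop :=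
  (∀ c ∈ L, c.1 ≠ c.2) ∧ NoOverlap L

def IsNet {n : ℕ} (C : Net n) : Prop := ∀ L ∈ C, IsLayer L

def IsGenNet {n : ℕ} (C : Net n) : Prop := ∀ L ∈ C, IsGenLayer L

/-- Apply one layer to a Boolean vector: a comparator `(i,j)` puts the min
(`&&`) on channel `i` and the max (`||`) on channel `j`. -/
noncomputable def applyLayer {n : ℕ} (L : Layer n) (x : Fin n → Bool) : Fin n → Bool :=
  fun k =>
    if h1 : ∃ c ∈ L, c.1 = k then x h1.choose.1 && x h1.choose.2
    else if h2 : ∃ c ∈ L, c.2 = k then x h2.choose.1 || x h2.choose.2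
    else x k

/-- Run a comparator network on a Boolean input (layers applied in sequence). -/
noncomputable def run {n : ℕ} (C : Net n) (x : Fin n → Bool) : Fin n → Bool :=
  C.foldl (fun y L => applyLayer L y) x

/-- Ascendingly sorted Boolean vector. -/
def BSorted {n : ℕ} (x : Fin n → Bool) : Prop :=
  ∀ i j : Fin n, i ≤ j → x i ≤ x j

/-- A sorting network: a comparator network sorting every Boolean input. -/
def IsSortingNet {n : ℕ} (C : Net n) : Prop :=
  IsNet C ∧ ∀ x : Fin n → Bool, BSorted (run C x)

/-- The set of outputs of a network on all Boolean inputs. -/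
def outputs {n : ℕ} (C : Net n) : Set (Fin n → Bool) := Set.range (run C)

/-- Apply one layer to a vector of naturals. -/
noncomputable def applyLayerN {n : ℕ} (L : Layer n) (x : Fin n → ℕ) : Fin n → ℕ :=
  fun k =>
    if h1 : ∃ c ∈ L, c.1 = k then min (x h1.choose.1) (x h1.choose.2)
    else if h2 : ∃ c ∈ L, c.2 = k then max (x h2.choose.1) (x h2.choose.2)
    else x k

noncomputable def runN {n : ℕ} (C : Net n) (x : Fin n → ℕ) : Fin n → ℕ :=
  C.foldl (fun y L => applyLayerN L y) x

def NSorted {n : ℕ} (x : Fin n → ℕ) : Prop :=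
  ∀ i j : Fin n, i ≤ j → x i ≤ x j

/-- Permute the coordinates of a Boolean vector by `π` (channel `k`'s value
moves to channel `π k`). -/
def permVec {n : ℕ} (π : Equiv.Perm (Fin n)) (x : Fin n → Bool) : Fin n → Bool :=
  fun i => x (π.symm i)

/-- The image of a set of Boolean vectors under coordinate permutation by `π`. -/
def permSet {n : ℕ} (π : Equiv.Perm (Fin n)) (X : Set (Fin n → Bool)) :
    Set (Fin n → Bool) :=
  permVec π '' X

/-- The image `π(L)` of a layer under a permutation of channels. -/
def permLayer {n : ℕ} (π : Equiv.Perm (Fin n)) (L : Layer n) : Layer n :=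
  L.image fun c => (π c.1, π c.2)

/-- Channel `i` is used by some comparator of the layer `L`. -/
def usedIn {n : ℕ} (L : Layer n) (i : Fin n) : Prop := ∃ c ∈ L, c.1 = i ∨ c.2 = i

/-- Channels `i` and `j` are joined by a comparator of `L`. -/
def Joined {n : ℕ} (L : Layer n) (i j : Fin n) : Prop := (i, j) ∈ L ∨ (j, i) ∈ L

/-- `i` is the smaller channel of some comparator of `L` (a min-channel). -/
def MinChan {n : ℕ} (L : Layer n) (i : Fin n) : Prop := ∃ c ∈ L, c.1 = i

/-- `i` is the larger channel of some comparator of `L` (a max-channel). -/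
def MaxChan {n : ℕ} (L : Layer n) (i : Fin n) : Prop := ∃ c ∈ L, c.2 = i

/-- A two-layer network `[L1, L2]` is redundant if some comparator can be removed
so that the outputs of the result are a permutation of the original outputs. -/
def Redundant {n : ℕ} (L1 L2 : Layer n) : Prop :=
  ∃ π : Equiv.Perm (Fin n),
    (∃ c ∈ L1, outputs [L1.erase c, L2] = permSet π (outputs [L1, L2])) ∨
    (∃ c ∈ L2, outputs [L1, L2.erase c] = permSet π (outputs [L1, L2]))

/-- A two-layer network `[L1, L2]` is saturated if it is non-redundant and no
comparator on two channels unused in the second layer can be added to the second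
layer so as to make the output set a proper subset of a permutation of the
original output set. -/
def Saturated {n : ℕ} (L1 L2 : Layer n) : Prop :=
  ¬ Redundant L1 L2 ∧
  ¬ ∃ (c : Comp n) (π : Equiv.Perm (Fin n)),
      c.1 < c.2 ∧ ¬ usedIn L2 c.1 ∧ ¬ usedIn L2 c.2 ∧
      outputs [L1, insert c L2] ⊂ permSet π (outputs [L1, L2])

/-- Vertices of the graph representation of `C`: the comparators of `C`,
tagged with the index of the layer containing them. -/
def Vertex {n : ℕ} (C : Net n) := {p : ℕ × Comp n // p.2 ∈ C.getD p.1 ∅}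

/-- The channel carrying the min output (`b = false`, label 1) or max output
(`b = true`, label 2) of a comparator. -/
def outChan {n : ℕ} (c : Comp n) (b : Bool) : Fin n := if b then c.2 else c.1

/-- An edge with label `b` (1 for min, 2 for max) from comparator `u` to
comparator `v`: the corresponding output of `u` is an input of `v`, i.e. `v`
is the next comparator on that channel. -/
def Edge {n : ℕ} (C : Net n) (b : Bool) (u v : ℕ × Comp n) : Prop :=
  u.1 < v.1 ∧ (outChan u.2 b = v.2.1 ∨ outChan u.2 b = v.2.2) ∧
  ∀ m, u.1 < m → m < v.1 → ¬ usedIn (C.getD m ∅) (outChan u.2 b)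

/-- The graph representations of `C` and `D` are isomorphic: a bijection of
comparators preserving the labeled edges. -/
def GraphIso {n m : ℕ} (C : Net n) (D : Net m) : Prop :=
  ∃ f : Vertex C ≃ Vertex D,
    ∀ (b : Bool) (u v : Vertex C),
      Edge C b u.val v.val ↔ Edge D b (f u).val (f v).val

/-- The graph representation of `C` is connected. -/
def GraphConnected {n : ℕ} (C : Net n) : Prop :=
  ∀ u v : Vertex C,
    Relation.ReflTransGen
      (fun a b : Vertex C => ∃ ℓ : Bool, Edge C ℓ a.val b.val ∨ Edge C ℓ b.val a.val) u v

/-- Reflection of a comparator: `(i,j) ↦ (n-j+1, n-i+1)` (in 1-based terms). -/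
def reflectComp {n : ℕ} (c : Comp n) : Comp n := (c.2.rev, c.1.rev)

def reflectLayer {n : ℕ} (L : Layer n) : Layer n := L.image reflectComp

/-- Reflection `C^R` of a comparator network. -/
def reflect {n : ℕ} (C : Net n) : Net n := C.map reflectLayer

/-- The first layer `F_n = {(2i-1, 2i) : 1 ≤ i ≤ ⌊n/2⌋}` (0-indexed: `(2i, 2i+1)`). -/
def FLayer (n : ℕ) : Layer n :=
  Finset.univ.filter fun c : Comp n => c.1.val % 2 = 0 ∧ c.2.val = c.1.val + 1

/-- The two-layer networks with first layer `F_n`, parametrized by second layer. -/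
def SecondLayers (n : ℕ) := {L : Layer n // IsLayer L}

/-- The number `|R(G_n)|` of equivalence classes of two-layer networks with
first layer `F_n`, under graph isomorphism `≈`. -/
noncomputable def numClasses (n : ℕ) : ℕ :=
  Nat.card (Quot fun L L' : SecondLayers n =>
    GraphIso ([FLayer n, L.val] : Net n) ([FLayer n, L'.val] : Net n))

/-- Redundant two-layer networks with first layer `F_n`. -/
def RedLayers (n : ℕ) := {L : Layer n // IsLayer L ∧ Redundant (FLayer n) L}

/-- The number of equivalence classes of redundant two-layer networks with
first layer `F_n`, under graph isomorphism `≈`. -/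
noncomputable def numRedClasses (n : ℕ) : ℕ :=
  Nat.card (Quot fun L L' : RedLayers n =>
    GraphIso ([FLayer n, L.val] : Net n) ([FLayer n, L'.val] : Net n))

section Aux

variable {n : ℕ}

lemma IsLayer.mono {L M : Layer n} (h : IsLayer L) (hsub : M ⊆ L) : IsLayer M :=
  ⟨fun c hc => h.1 c (hsub hc), fun c hc c' hc' => h.2 c (hsub hc) c' (hsub hc')⟩

lemma eq_of_fst_eq {L : Layer n} (hL : IsLayer L) {c c' : Comp n} (hc : c ∈ L)
    (hc' : c' ∈ L) (h : c.1 = c'.1) : c = c' := by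
  by_contra hne; exact (hL.2 c hc c' hc' hne).1 h

lemma eq_of_snd_eq {L : Layer n} (hL : IsLayer L) {c c' : Comp n} (hc : c ∈ L)
    (hc' : c' ∈ L) (h : c.2 = c'.2) : c = c' := by
  by_contra hne; exact (hL.2 c hc c' hc' hne).2.2.2 h

lemma fst_ne_snd {L : Layer n} (hL : IsLayer L) {c : Comp n} (hc : c ∈ L) : c.1 ≠ c.2 :=
  (hL.1 c hc).ne

lemma touch_eq {L : Layer n} (hL : IsLayer L) {d d' : Comp n} (hd : d ∈ L) (hd' : d' ∈ L)
    {k : Fin n} (h : d.1 = k ∨ d.2 = k) (h' : d'.1 = k ∨ d'.2 = k) : d = d' := by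
  by_contra hne
  obtain ⟨h11, h12, h21, h22⟩ := hL.2 d hd d' hd' hne
  rcases h with h | h <;> rcases h' with h' | h'
  · exact h11 (h.trans h'.symm)
  · exact h12 (h.trans h'.symm)
  · exact h21 (h.trans h'.symm)
  · exact h22 (h.trans h'.symm)

lemma applyLayer_fst {L : Layer n} (hL : IsLayer L) {d : Comp n} (hd : d ∈ L)
    (x : Fin n → Bool) : applyLayer L x d.1 = (x d.1 && x d.2) := by
  have h1 : ∃ c ∈ L, c.1 = d.1 := ⟨d, hd, rfl⟩
  simp only [applyLayer]
  rw [dif_pos h1]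
  obtain ⟨hm, he⟩ := h1.choose_spec
  have hch : h1.choose = d := eq_of_fst_eq hL hm hd he
  rw [hch]

lemma applyLayer_snd {L : Layer n} (hL : IsLayer L) {d : Comp n} (hd : d ∈ L)
    (x : Fin n → Bool) : applyLayer L x d.2 = (x d.1 || x d.2) := by
  have h1 : ¬ ∃ c ∈ L, c.1 = d.2 := by
    rintro ⟨c, hc, he⟩
    by_cases hcd : c = d
    · exact fst_ne_snd hL hc (by rw [hcd] at he ⊢; exact he)
    · exact (hL.2 c hc d hd hcd).2.1 he
  have h2 : ∃ c ∈ L, c.2 = d.2 := ⟨d, hd, rfl⟩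
  simp only [applyLayer]
  rw [dif_neg h1, dif_pos h2]
  obtain ⟨hm, he⟩ := h2.choose_spec
  have hch : h2.choose = d := eq_of_snd_eq hL hm hd he
  rw [hch]

lemma applyLayer_unused {L : Layer n} {k : Fin n} (h : ¬ usedIn L k) (x : Fin n → Bool) :
    applyLayer L x k = x k := by
  have h1 : ¬ ∃ c ∈ L, c.1 = k := fun ⟨c, hc, he⟩ => h ⟨c, hc, Or.inl he⟩
  have h2 : ¬ ∃ c ∈ L, c.2 = k := fun ⟨c, hc, he⟩ => h ⟨c, hc, Or.inr he⟩
  simp only [applyLayer]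
  rw [dif_neg h1, dif_neg h2]

lemma band_of_le {a b : Bool} (h : a ≤ b) : (a && b) = a := by
  revert h; cases a <;> cases b <;> decide

lemma bor_of_le {a b : Bool} (h : a ≤ b) : (a || b) = b := by
  revert h; cases a <;> cases b <;> decide

lemma band_le_bor (a b : Bool) : (a && b) ≤ (a || b) := by cases a <;> cases b <;> decide

lemma applyLayer_fix {L : Layer n} (hL : IsLayer L) {x : Fin n → Bool}
    (hx : ∀ c ∈ L, x c.1 ≤ x c.2) : applyLayer L x = x := by
  funext k
  by_cases hk : usedIn L k
  · obtain ⟨d, hd, hdk⟩ := hk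
    rcases hdk with h | h
    · rw [← h, applyLayer_fst hL hd, band_of_le (hx d hd)]
    · rw [← h, applyLayer_snd hL hd, bor_of_le (hx d hd)]
  · exact applyLayer_unused hk x

lemma applyLayer_sorted {L : Layer n} (hL : IsLayer L) (x : Fin n → Bool) {d : Comp n}
    (hd : d ∈ L) : applyLayer L x d.1 ≤ applyLayer L x d.2 := by
  rw [applyLayer_fst hL hd, applyLayer_snd hL hd]
  exact band_le_bor _ _

lemma run_pair (A B : Layer n) (x : Fin n → Bool) :
    run [A, B] x = applyLayer B (applyLayer A x) := rfl

lemma pull_false {S : Layer n} (hS : IsLayer S) {y z : Fin n → Bool}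
    (hz : applyLayer S y = z) {k : Fin n}
    (hcomp : ∀ d ∈ S, d.1 = k ∨ d.2 = k → z d.2 = false)
    (h0 : z k = false) : y k = false := by
  by_cases hk : usedIn S k
  · obtain ⟨d, hd, hdk⟩ := hk
    have e2 : (y d.1 || y d.2) = false := by
      rw [← applyLayer_snd hS hd y, hz]; exact hcomp d hd hdk
    have e21 : y d.1 = false ∧ y d.2 = false := by
      constructor <;> revert e2 <;> cases y d.1 <;> cases y d.2 <;> decide
    rcases hdk with h | h
    · rw [← h]; exact e21.1
    · rw [← h]; exact e21.2
  · rw [← h0, ← hz, applyLayer_unused hk]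

end Aux
section Aux2

variable {n : ℕ}

lemma outputs_subset_erase_fst {L1 S : Layer n} (hL1 : IsLayer L1) {c : Comp n}
    (hc : c ∈ L1) : outputs [L1, S] ⊆ outputs [L1.erase c, S] := by
  rintro z ⟨x, rfl⟩
  refine ⟨applyLayer L1 x, ?_⟩
  show applyLayer S (applyLayer (L1.erase c) (applyLayer L1 x))
      = applyLayer S (applyLayer L1 x)
  rw [applyLayer_fix (hL1.mono (Finset.erase_subset c L1))
    (fun e he => applyLayer_sorted hL1 x (Finset.mem_of_mem_erase he))]

lemma applyLayer_erase_eq {S : Layer n} (hS : IsLayer S) {c : Comp n} (hc : c ∈ S)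
    {y : Fin n → Bool} (hy : y c.1 ≤ y c.2) :
    applyLayer (S.erase c) y = applyLayer S y := by
  have hsub : S.erase c ⊆ S := Finset.erase_subset c S
  funext k
  by_cases hk : usedIn (S.erase c) k
  · obtain ⟨d, hd, hdk⟩ := hk
    have hdS : d ∈ S := hsub hd
    rcases hdk with h | h
    · rw [← h, applyLayer_fst (hS.mono hsub) hd, applyLayer_fst hS hdS]
    · rw [← h, applyLayer_snd (hS.mono hsub) hd, applyLayer_snd hS hdS]
  · rw [applyLayer_unused hk]
    by_cases hkS : usedIn S k
    · obtain ⟨d, hdS, hdk⟩ := hkS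
      have hdc : d = c := by
        by_contra hne
        exact hk ⟨d, Finset.mem_erase.mpr ⟨hne, hdS⟩, hdk⟩
      subst hdc
      rcases hdk with h | h
      · rw [← h, applyLayer_fst hS hdS, band_of_le hy]
      · rw [← h, applyLayer_snd hS hdS, bor_of_le hy]
    · rw [applyLayer_unused hkS]

lemma outputs_erase_dup {L1 S : Layer n} (hL1 : IsLayer L1) (hS : IsLayer S) {c : Comp n}
    (hc1 : c ∈ L1) (hcS : c ∈ S) :
    outputs [L1, S.erase c] = outputs [L1, S] := by
  have hrun : run [L1, S.erase c] = run [L1, S] := by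
    funext x
    show applyLayer (S.erase c) (applyLayer L1 x) = applyLayer S (applyLayer L1 x)
    exact applyLayer_erase_eq hS hcS (applyLayer_sorted hL1 x hc1)
  unfold outputs
  rw [hrun]

lemma permVec_comp (π σ : Equiv.Perm (Fin n)) (x : Fin n → Bool) :
    permVec π (permVec σ x) = permVec (π * σ) x := by
  funext i
  simp [permVec, Equiv.Perm.mul_def, Equiv.symm_trans_apply]

lemma permSet_one (X : Set (Fin n → Bool)) : permSet (1 : Equiv.Perm (Fin n)) X = X := by
  have h : permVec (1 : Equiv.Perm (Fin n)) = id := funext fun x => rfl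
  rw [permSet, h, Set.image_id]

lemma permSet_comp (π σ : Equiv.Perm (Fin n)) (X : Set (Fin n → Bool)) :
    permSet π (permSet σ X) = permSet (π * σ) X := by
  unfold permSet
  rw [← Set.image_comp]
  have h : permVec (n := n) π ∘ permVec σ = permVec (π * σ) := funext (permVec_comp π σ)
  rw [h]

lemma permVec_injective (π : Equiv.Perm (Fin n)) : Function.Injective (permVec (n := n) π) := by
  intro a b h
  funext k
  have h2 := congrFun h (π k)
  simpa [permVec] using h2

lemma ncard_permSet (π : Equiv.Perm (Fin n)) (X : Set (Fin n → Bool)) :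
    (permSet π X).ncard = X.ncard :=
  Set.ncard_image_of_injective X (permVec_injective π)

lemma permSet_mono (π : Equiv.Perm (Fin n)) {X Y : Set (Fin n → Bool)} (h : X ⊆ Y) :
    permSet π X ⊆ permSet π Y := Set.image_mono h

end Aux2
section KeyLemma

variable {n : ℕ}

/-- Key lemma: erasing a comparator of the first layer that does not occur in
the second layer strictly enlarges the output set. -/
lemma erase_fst_strict {L1 S : Layer n} (hL1 : IsLayer L1) (hS : IsLayer S) {c : Comp n}
    (hc : c ∈ L1) (hcS : c ∉ S) :
    ∃ z, z ∈ outputs [L1.erase c, S] ∧ z ∉ outputs [L1, S] := by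
  have hij : c.1 < c.2 := hL1.1 c hc
  have hije : c.1 ≠ c.2 := hij.ne
  have hunit_fix : applyLayer (L1.erase c) (fun k => decide (k = c.1))
      = fun k => decide (k = c.1) := by
    apply applyLayer_fix (hL1.mono (Finset.erase_subset c L1))
    intro e he
    have h1 : decide (e.1 = c.1) = false := by
      apply decide_eq_false
      intro h
      exact (Finset.mem_erase.mp he).1 (eq_of_fst_eq hL1 (Finset.mem_of_mem_erase he) hc h)
    show (decide (e.1 = c.1) : Bool) ≤ (decide (e.2 = c.1) : Bool)
    rw [h1]
    exact Bool.false_le _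
  by_cases hused : usedIn S c.1
  · -- c.1 is used in S by comparator d
    obtain ⟨d, hdS, hdi⟩ := hused
    have hd12 : d.1 ≠ d.2 := fst_ne_snd hS hdS
    have hc2d1 : d.1 ≠ c.2 := by
      intro h
      rcases hdi with h1 | h1
      · exact hije (h1.symm.trans h)
      · have hlt := hS.1 d hdS
        rw [h, h1] at hlt
        exact absurd hij (asymm hlt)
    have hc2d2 : d.2 ≠ c.2 := by
      intro h
      rcases hdi with h1 | h1
      · have hdc : d = c := Prod.ext h1 h
        exact hcS (hdc ▸ hdS)
      · exact hije (h1.symm.trans h)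
    by_cases hmin : ∃ e ∈ L1, e ≠ c ∧ (e.1 = d.1 ∨ e.1 = d.2)
    · -- Case A2 : the other endpoint of d is a min-channel of L1
      obtain ⟨e, heL1, hec, hep⟩ := hmin
      have hep1 : e.1 ≠ c.1 := fun h => hec (eq_of_fst_eq hL1 heL1 hc h)
      have he12 : e.1 ≠ e.2 := fst_ne_snd hL1 heL1
      have he2c1 : e.2 ≠ c.1 := fun h => hec (touch_eq hL1 heL1 hc (Or.inr h) (Or.inl rfl))
      have he2d1 : e.2 ≠ d.1 := by
        intro h
        rcases hdi with h1 | h1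
        · exact he2c1 (h.trans h1)
        · rcases hep with h2 | h2
          · exact he12 (h2.trans h.symm)
          · exact hep1 (h2.trans h1)
      have he2d2 : e.2 ≠ d.2 := by
        intro h
        rcases hdi with h1 | h1
        · rcases hep with h2 | h2
          · exact hep1 (h2.trans h1)
          · exact he12 (h2.trans h.symm)
        · exact he2c1 (h.trans h1)
      set u : Fin n → Bool := (fun k => decide (k = c.1)) with hu
      set z := applyLayer S u with hzdef
      have hz2 : z d.2 = true := by
        rw [hzdef, applyLayer_snd hS hdS]
        rcases hdi with h1 | h1 <;> simp [hu, h1]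
      have hzm : ∀ m : Fin n, m ≠ d.2 → z m = false := by
        intro m hm
        by_cases hmu : usedIn S m
        · obtain ⟨d'', hd'', ht⟩ := hmu
          by_cases hdd : d'' = d
          · subst hdd
            have hm1 : d''.1 = m := by
              rcases ht with h | h
              · exact h
              · exact absurd h.symm hm
            rw [hzdef, ← hm1, applyLayer_fst hS hd'']
            rcases hdi with h1 | h1
            · have h2 : decide (d''.2 = c.1) = false :=
                decide_eq_false fun h => hd12 (h1.trans h.symm)
              simp [hu, h2]
            · have h2 : decide (d''.1 = c.1) = false :=
                decide_eq_false fun h => hd12 (h.trans h1.symm)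
              simp [hu, h2]
          · have hne1 : d''.1 ≠ c.1 := fun h => hdd (touch_eq hS hd'' hdS (Or.inl h) hdi)
            have hne2 : d''.2 ≠ c.1 := fun h => hdd (touch_eq hS hd'' hdS (Or.inr h) hdi)
            rcases ht with h | h
            · rw [hzdef, ← h, applyLayer_fst hS hd'']
              simp [hu, hne1, hne2]
            · rw [hzdef, ← h, applyLayer_snd hS hd'']
              simp [hu, hne1, hne2]
        · rw [hzdef, applyLayer_unused hmu]
          have hmc : m ≠ c.1 := by
            intro h
            apply hmu
            rcases hdi with h1 | h1
            · exact ⟨d, hdS, Or.inl (h1.trans h.symm)⟩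
            · exact ⟨d, hdS, Or.inr (h1.trans h.symm)⟩
          simp [hu, hmc]
      refine ⟨z, ⟨u, ?_⟩, ?_⟩
      · show applyLayer S (applyLayer (L1.erase c) u) = z
        rw [hunit_fix]
      · rintro ⟨x, hx⟩
        obtain ⟨y, hyx, hz⟩ : ∃ y, y = applyLayer L1 x ∧ applyLayer S y = z := ⟨_, rfl, hx⟩
        have hsort : ∀ {dd : Comp n}, dd ∈ L1 → y dd.1 ≤ y dd.2 := by
          intro dd hdd
          rw [hyx]
          exact applyLayer_sorted hL1 x hdd
        have hde2 : (y d.1 || y d.2) = true := by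
          rw [← applyLayer_snd hS hdS y, hz]
          exact hz2
        by_cases hyi : y c.1 = true
        · have hyj : y c.2 = false := by
            apply pull_false hS hz
            · intro d' hd' hdk
              have hne : d' ≠ d := by
                intro hdd; subst hdd
                rcases hdk with h | h
                · exact hc2d1 h
                · exact hc2d2 h
              exact hzm d'.2 (hS.2 d' hd' d hdS hne).2.2.2
            · exact hzm c.2 (fun h => hc2d2 h.symm)
          have hle := hsort hc
          rw [hyi, hyj] at hle
          exact absurd hle (by decide)
        · rw [Bool.not_eq_true] at hyi
          have hye1 : y e.1 = true := by
            rcases hdi with h1 | h1 <;> rcases hep with h2 | h2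
            · exact absurd (h2.trans h1) hep1
            · have hd1f : y d.1 = false := by rw [h1]; exact hyi
              rw [hd1f] at hde2
              rw [h2]
              simpa using hde2
            · have hd2f : y d.2 = false := by rw [h1]; exact hyi
              rw [hd2f] at hde2
              rw [h2]
              simpa using hde2
            · exact absurd (h2.trans h1) hep1
          have hye2 : y e.2 = true := by
            have hle := hsort heL1
            rw [hye1] at hle
            cases hv : y e.2
            · rw [hv] at hle; exact absurd hle (by decide)
            · rfl
          have hye2f : y e.2 = false := by
            apply pull_false hS hz
            · intro d' hd' hdk
              have hne : d' ≠ d := by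
                intro hdd; subst hdd
                rcases hdk with h | h
                · exact he2d1 h.symm
                · exact he2d2 h.symm
              exact hzm d'.2 (hS.2 d' hd' d hdS hne).2.2.2
            · exact hzm e.2 he2d2
          rw [hye2] at hye2f
          exact absurd hye2f (by decide)
    · -- Case A1 : the other endpoint of d is not a min-channel of L1
      push_neg at hmin
      refine ⟨(fun k => (decide (k = d.1) || decide (k = d.2))),
        ⟨(fun k => (decide (k = d.1) || decide (k = d.2))), ?_⟩, ?_⟩
      · show applyLayer S (applyLayer (L1.erase c)
            (fun k => (decide (k = d.1) || decide (k = d.2)))) = _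
        have hfix1 : applyLayer (L1.erase c) (fun k => (decide (k = d.1) || decide (k = d.2)))
            = fun k => (decide (k = d.1) || decide (k = d.2)) := by
          apply applyLayer_fix (hL1.mono (Finset.erase_subset c L1))
          intro e he
          have he1 : e ∈ L1 := Finset.mem_of_mem_erase he
          have hec : e ≠ c := (Finset.mem_erase.mp he).1
          have h1 : decide (e.1 = d.1) = false := decide_eq_false (hmin e he1 hec).1
          have h2 : decide (e.1 = d.2) = false := decide_eq_false (hmin e he1 hec).2
          show (decide (e.1 = d.1) || decide (e.1 = d.2) : Bool)
              ≤ (decide (e.2 = d.1) || decide (e.2 = d.2) : Bool)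
          rw [h1, h2]
          exact Bool.false_le _
        rw [hfix1]
        apply applyLayer_fix hS
        intro d' hd'
        show (decide (d'.1 = d.1) || decide (d'.1 = d.2) : Bool)
            ≤ (decide (d'.2 = d.1) || decide (d'.2 = d.2) : Bool)
        by_cases hdd : d' = d
        · subst hdd
          simp
        · have h1 : decide (d'.1 = d.1) = false := decide_eq_false (hS.2 d' hd' d hdS hdd).1
          have h2 : decide (d'.1 = d.2) = false := decide_eq_false (hS.2 d' hd' d hdS hdd).2.1
          rw [h1, h2]
          exact Bool.false_le _
      · rintro ⟨x, hx⟩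
        obtain ⟨y, hyx, hz⟩ : ∃ y, y = applyLayer L1 x ∧
            applyLayer S y = (fun k => (decide (k = d.1) || decide (k = d.2))) := ⟨_, rfl, hx⟩
        have hsort : ∀ {dd : Comp n}, dd ∈ L1 → y dd.1 ≤ y dd.2 := by
          intro dd hdd
          rw [hyx]
          exact applyLayer_sorted hL1 x hdd
        have htr : (y d.1 && y d.2) = true := by
          have h3 := congrFun hz d.1
          rw [applyLayer_fst hS hdS] at h3
          simpa using h3
        obtain ⟨ha, hb⟩ := Bool.and_eq_true_iff.mp htr
        have hyc1 : y c.1 = true := by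
          rcases hdi with h1 | h1
          · rw [← h1]; exact ha
          · rw [← h1]; exact hb
        have hyc2 : y c.2 = false := by
          apply pull_false hS hz
          · intro d' hd' hdk
            have hne : d' ≠ d := by
              intro hdd; subst hdd
              rcases hdk with h | h
              · exact hc2d1 h
              · exact hc2d2 h
            have h1 : decide (d'.2 = d.1) = false :=
              decide_eq_false (hS.2 d' hd' d hdS hne).2.2.1
            have h2 : decide (d'.2 = d.2) = false :=
              decide_eq_false (hS.2 d' hd' d hdS hne).2.2.2
            show (decide (d'.2 = d.1) || decide (d'.2 = d.2) : Bool) = false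
            rw [h1, h2]
            rfl
          · show (decide (c.2 = d.1) || decide (c.2 = d.2) : Bool) = false
            have h1 : decide (c.2 = d.1) = false := decide_eq_false fun h => hc2d1 h.symm
            have h2 : decide (c.2 = d.2) = false := decide_eq_false fun h => hc2d2 h.symm
            rw [h1, h2]
            rfl
        have hle := hsort hc
        rw [hyc1, hyc2] at hle
        exact absurd hle (by decide)
  · -- Case B : c.1 is unused in S
    refine ⟨(fun k => decide (k = c.1)), ⟨(fun k => decide (k = c.1)), ?_⟩, ?_⟩
    · show applyLayer S (applyLayer (L1.erase c) (fun k => decide (k = c.1))) = _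
      rw [hunit_fix]
      apply applyLayer_fix hS
      intro d hd
      have h1 : decide (d.1 = c.1) = false := decide_eq_false fun h => hused ⟨d, hd, Or.inl h⟩
      show (decide (d.1 = c.1) : Bool) ≤ (decide (d.2 = c.1) : Bool)
      rw [h1]
      exact Bool.false_le _
    · rintro ⟨x, hx⟩
      obtain ⟨y, hyx, hz⟩ : ∃ y, y = applyLayer L1 x ∧
          applyLayer S y = (fun k => decide (k = c.1)) := ⟨_, rfl, hx⟩
      have hsort : ∀ {dd : Comp n}, dd ∈ L1 → y dd.1 ≤ y dd.2 := by
        intro dd hdd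
        rw [hyx]
        exact applyLayer_sorted hL1 x hdd
      have hyi : y c.1 = true := by
        have h2 := applyLayer_unused hused y
        have h3 := congrFun hz c.1
        rw [h2] at h3
        simpa using h3
      have hyj : y c.2 = false := by
        apply pull_false hS hz
        · intro d hd hdk
          show (decide (d.2 = c.1) : Bool) = false
          exact decide_eq_false fun h => hused ⟨d, hd, Or.inr h⟩
        · show (decide (c.2 = c.1) : Bool) = false
          exact decide_eq_false fun h => hije h.symm
      have hle := hsort hc
      rw [hyi, hyj] at hle
      exact absurd hle (by decide)

end KeyLemma

/-- for any maximal layer `L1` and layer `L2` there are a layer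
`S` and a permutation `π` with `outputs(L1;S) ⊆ π(outputs(L1;L2))` and `L1;S`
saturated. -/
theorem saturate_two_layers {n : ℕ} (L1 L2 : Layer n)
    (h1 : IsLayer L1) (hmax : L1.card = n / 2) (h2 : IsLayer L2) :
    ∃ (S : Layer n) (π : Equiv.Perm (Fin n)),
      IsLayer S ∧
      outputs [L1, S] ⊆ permSet π (outputs [L1, L2]) ∧
      Saturated L1 S := by
  classical
  have hfin : ∀ X : Set (Fin n → Bool), X.Finite := fun X => Set.toFinite X
  set O := outputs [L1, L2] with hO
  set P : Layer n → Prop := fun T =>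
    IsLayer T ∧ ∃ π : Equiv.Perm (Fin n), outputs [L1, T] ⊆ permSet π O with hPdef
  set μ : Layer n → ℕ := fun T => (outputs [L1, T]).ncard * (n * n + 1) + T.card with hμ
  have hPL2 : P L2 := ⟨h2, 1, by rw [permSet_one]⟩
  obtain ⟨S, hSmem, hSmin⟩ := Finset.exists_min_image (Finset.univ.filter P) μ
    ⟨L2, Finset.mem_filter.mpr ⟨Finset.mem_univ _, hPL2⟩⟩
  obtain ⟨hSL, π, hsub⟩ := (Finset.mem_filter.mp hSmem).2
  have hmin : ∀ T, P T → μ S ≤ μ T := fun T hT =>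
    hSmin T (Finset.mem_filter.mpr ⟨Finset.mem_univ _, hT⟩)
  have hcardbound : ∀ T : Layer n, T.card ≤ n * n := by
    intro T
    calc T.card ≤ Fintype.card (Comp n) := Finset.card_le_univ T
    _ = n * n := by simp
  refine ⟨S, π, hSL, hsub, ?_, ?_⟩
  · -- not redundant
    rintro ⟨σ, hred⟩
    rcases hred with ⟨c, hcL1, heq⟩ | ⟨c, hcS, heq⟩
    · by_cases hcS : c ∈ S
      · -- duplicate comparator: erase from S
        have hout : outputs [L1, S.erase c] = outputs [L1, S] :=
          outputs_erase_dup h1 hSL hcL1 hcS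
        have hPT : P (S.erase c) :=
          ⟨hSL.mono (Finset.erase_subset _ _), π, by rw [hout]; exact hsub⟩
        have hle := hmin _ hPT
        have hlt : μ (S.erase c) < μ S := by
          have hcard : (S.erase c).card < S.card := Finset.card_erase_lt_of_mem hcS
          simp only [hμ]
          rw [hout]
          exact Nat.add_lt_add_left hcard _
        exact absurd hle (not_le.mpr hlt)
      · obtain ⟨z, hz1, hz2⟩ := erase_fst_strict h1 hSL hcL1 hcS
        have hsub2 : outputs [L1, S] ⊆ outputs [L1.erase c, S] :=
          outputs_subset_erase_fst h1 hcL1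
        have hcardeq : (outputs [L1.erase c, S]).ncard = (outputs [L1, S]).ncard := by
          rw [heq, ncard_permSet]
        have hEq : outputs [L1, S] = outputs [L1.erase c, S] :=
          Set.eq_of_subset_of_ncard_le hsub2 (le_of_eq hcardeq) (hfin _)
        rw [← hEq] at hz1
        exact hz2 hz1
    · -- redundancy in second layer: erase from S
      have hPT : P (S.erase c) := by
        refine ⟨hSL.mono (Finset.erase_subset _ _), σ * π, ?_⟩
        rw [heq, ← permSet_comp]
        exact permSet_mono σ hsub
      have hle := hmin _ hPT
      have hlt : μ (S.erase c) < μ S := by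
        simp only [hμ]
        rw [heq, ncard_permSet]
        exact Nat.add_lt_add_left (Finset.card_erase_lt_of_mem hcS) _
      exact absurd hle (not_le.mpr hlt)
  · -- no comparator can be added
    rintro ⟨c, σ, hc12, hu1, hu2, hss⟩
    have hT : IsLayer (insert c S) := by
      constructor
      · intro e he
        rcases Finset.mem_insert.mp he with rfl | heS
        · exact hc12
        · exact hSL.1 e heS
      · intro e he e' he' hne
        rcases Finset.mem_insert.mp he with rfl | heS <;>
          rcases Finset.mem_insert.mp he' with h' | h'
        · exact absurd h'.symm hne
        · exact ⟨fun h => hu1 ⟨e', h', Or.inl h.symm⟩, fun h => hu1 ⟨e', h', Or.inr h.symm⟩,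
            fun h => hu2 ⟨e', h', Or.inl h.symm⟩, fun h => hu2 ⟨e', h', Or.inr h.symm⟩⟩
        · subst h'
          exact ⟨fun h => hu1 ⟨e, heS, Or.inl h⟩, fun h => hu2 ⟨e, heS, Or.inl h⟩,
            fun h => hu1 ⟨e, heS, Or.inr h⟩, fun h => hu2 ⟨e, heS, Or.inr h⟩⟩
        · exact hSL.2 e heS e' h' hne
    have hPT : P (insert c S) := by
      refine ⟨hT, σ * π, ?_⟩
      refine (subset_of_ssubset hss).trans ?_
      rw [← permSet_comp]
      exact permSet_mono σ hsub
    have hlt : (outputs [L1, insert c S]).ncard < (outputs [L1, S]).ncard := by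
      have h1' : (outputs [L1, insert c S]).ncard < (permSet σ (outputs [L1, S])).ncard :=
        Set.ncard_lt_ncard hss (hfin _)
      rwa [ncard_permSet] at h1'
    have hμlt : μ (insert c S) < μ S := by
      simp only [hμ]
      calc (outputs [L1, insert c S]).ncard * (n * n + 1) + (insert c S).card
          ≤ (outputs [L1, insert c S]).ncard * (n * n + 1) + n * n :=
            Nat.add_le_add_left (hcardbound _) _
        _ < (outputs [L1, insert c S]).ncard * (n * n + 1) + (n * n + 1) :=
            Nat.add_lt_add_left (Nat.lt_succ_self _) _
        _ = ((outputs [L1, insert c S]).ncard + 1) * (n * n + 1) := (Nat.succ_mul _ _).symm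
        _ ≤ (outputs [L1, S]).ncard * (n * n + 1) := Nat.mul_le_mul_right _ hlt
        _ ≤ (outputs [L1, S]).ncard * (n * n + 1) + S.card := Nat.le_add_right _ _
    exact absurd (hmin _ hPT) (not_le.mpr hμlt)

end SN
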